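/- Let q ∈ ℂ ∖ {0} be not a root of unity and let u ∈ ℂ(s) be nonzero. Assume there exists a ∈ ℂ ∖ {0} such that either (a is a pole of u and for every integer n ∈ ℤ the point qⁿ·a is not a zero of u) or (a is a zero of u and for every integer n ∈ ℤ the point qⁿ·a is not a pole of u). Then there is no nonzero h ∈ ℂ(s) with h^{σ} = u·h (i.e. with h(q·s) = u(s)·h(s)). -/

import Mathlib

/-!
Statement 7 (pole propagation for rank-one q-difference equations): if q is not a root
of unity and u ∈ ℂ(s) has a pole (resp. zero) a ≠ 0 whose σ-orbit never meets a zero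
(resp. pole) of u, then h^σ = u·h has no nonzero rational solution.
-/

noncomputable section

/-- `a` is a pole of the rational function `h`: the (reduced) denominator of `h`
vanishes at `a`. -/
def IsPole (h : RatFunc ℂ) (a : ℂ) : Prop := h.denom.eval a = 0

/-- `a` is a zero of the rational function `h`: the (reduced) numerator of `h`
vanishes at `a`. -/
def IsZero (h : RatFunc ℂ) (a : ℂ) : Prop := h.num.eval a = 0

namespace Statement7Aux

open Polynomial

/-- Order of vanishing of a rational function at a point. -/
def ordAt (a : ℂ) (h : RatFunc ℂ) : ℤ :=
  (rootMultiplicity a h.num : ℤ) - (rootMultiplicity a h.denom : ℤ)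

lemma ordAt_rep {h : RatFunc ℂ} (hh : h ≠ 0) {p r : ℂ[X]} (hp : p ≠ 0) (hr : r ≠ 0)
    (heq : h = algebraMap ℂ[X] (RatFunc ℂ) p / algebraMap ℂ[X] (RatFunc ℂ) r) (a : ℂ) :
    ordAt a h = (rootMultiplicity a p : ℤ) - (rootMultiplicity a r : ℤ) := by
  have key : h.num * r = p * h.denom := (RatFunc.num_mul_eq_mul_denom_iff hr).mpr heq
  have h1 : rootMultiplicity a (h.num * r) = rootMultiplicity a (p * h.denom) := by rw [key]
  rw [rootMultiplicity_mul (mul_ne_zero (RatFunc.num_ne_zero hh) hr),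
      rootMultiplicity_mul (mul_ne_zero hp h.denom_ne_zero)] at h1
  unfold ordAt; omega

lemma ordAt_mul {u h : RatFunc ℂ} (hu : u ≠ 0) (hh : h ≠ 0) (a : ℂ) :
    ordAt a (u * h) = ordAt a u + ordAt a h := by
  have heq : u * h = algebraMap ℂ[X] (RatFunc ℂ) (u.num * h.num) /
      algebraMap ℂ[X] (RatFunc ℂ) (u.denom * h.denom) := by
    rw [map_mul, map_mul, ← div_mul_div_comm, RatFunc.num_div_denom, RatFunc.num_div_denom]
  rw [ordAt_rep (mul_ne_zero hu hh)
      (mul_ne_zero (RatFunc.num_ne_zero hu) (RatFunc.num_ne_zero hh))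
      (mul_ne_zero u.denom_ne_zero h.denom_ne_zero) heq a,
    rootMultiplicity_mul (mul_ne_zero (RatFunc.num_ne_zero hu) (RatFunc.num_ne_zero hh)),
    rootMultiplicity_mul (mul_ne_zero u.denom_ne_zero h.denom_ne_zero)]
  unfold ordAt; push_cast; ring

variable {q : ℂ}

lemma comp_qX_ne_zero (hq : q ≠ 0) {p : ℂ[X]} (hp : p ≠ 0) :
    p.comp (C q * X) ≠ 0 := by
  intro h0
  have : (p.comp (C q * X)).comp (C q⁻¹ * X) = p := by
    rw [comp_assoc]
    have : (C q * X).comp (C q⁻¹ * X) = X := by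
      simp [mul_comp, ← mul_assoc, ← C_mul, mul_inv_cancel₀ hq]
    rw [this, comp_X]
  rw [h0, zero_comp] at this
  exact hp this.symm

lemma rootMultiplicity_comp (hq : q ≠ 0) {p : ℂ[X]} (hp : p ≠ 0) (a : ℂ) :
    rootMultiplicity a (p.comp (C q * X)) = rootMultiplicity (q * a) p := by
  obtain ⟨t, ht, hnd⟩ := exists_eq_pow_rootMultiplicity_mul_and_not_dvd p hp (q * a)
  have ht0 : t ≠ 0 := by rintro rfl; simp at hnd
  have hteval : t.eval (q * a) ≠ 0 := fun he => hnd (dvd_iff_isRoot.mpr he)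
  set m := p.rootMultiplicity (q * a) with hm
  have hlin : C q * X - C (q * a) = C q * (X - C a) := by rw [C_mul]; ring
  have hfac : p.comp (C q * X) = C q ^ m * ((X - C a) ^ m * t.comp (C q * X)) := by
    conv_lhs => rw [ht]
    rw [mul_comp, pow_comp, sub_comp, X_comp, C_comp, hlin, mul_pow]
    ring
  have htc : t.comp (C q * X) ≠ 0 := comp_qX_ne_zero hq ht0
  have htceval : (t.comp (C q * X)).eval a ≠ 0 := by
    rwa [eval_comp, eval_mul, eval_C, eval_X]
  have h1 : (X - C a) ^ m * t.comp (C q * X) ≠ 0 :=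
    mul_ne_zero (pow_ne_zero _ (X_sub_C_ne_zero a)) htc
  rw [hfac, rootMultiplicity_mul (mul_ne_zero (pow_ne_zero _ (C_ne_zero.mpr hq)) h1),
    rootMultiplicity_mul h1, ← C_pow, rootMultiplicity_C,
    rootMultiplicity_X_sub_C_pow,
    rootMultiplicity_eq_zero (by simpa [IsRoot] using htceval)]
  omega

variable {σ : RatFunc ℂ ≃ₐ[ℂ] RatFunc ℂ}

lemma sigma_algebraMap (hσ : σ RatFunc.X = RatFunc.C q * RatFunc.X) (p : ℂ[X]) :
    σ (algebraMap ℂ[X] (RatFunc ℂ) p) = algebraMap ℂ[X] (RatFunc ℂ) (p.comp (C q * X)) := by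
  have key : (σ.toAlgHom.comp (IsScalarTower.toAlgHom ℂ ℂ[X] (RatFunc ℂ)))
      = (IsScalarTower.toAlgHom ℂ ℂ[X] (RatFunc ℂ)).comp (aeval (C q * X)) := by
    apply Polynomial.algHom_ext
    simp only [AlgHom.comp_apply, IsScalarTower.coe_toAlgHom', aeval_X]
    rw [RatFunc.algebraMap_X, show σ.toAlgHom RatFunc.X = σ RatFunc.X from rfl, hσ]
    rw [map_mul, RatFunc.algebraMap_C, RatFunc.algebraMap_X]
  have := DFunLike.congr_fun key p
  simpa [comp_eq_aeval] using this

lemma ordAt_sigma (hq : q ≠ 0) (hσ : σ RatFunc.X = RatFunc.C q * RatFunc.X)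
    {h : RatFunc ℂ} (hh : h ≠ 0) (a : ℂ) :
    ordAt a (σ h) = ordAt (q * a) h := by
  have hσh : σ h ≠ 0 := fun h0 => hh (by simpa using σ.injective (h0.trans (map_zero σ).symm))
  have heq : σ h = algebraMap ℂ[X] (RatFunc ℂ) (h.num.comp (C q * X)) /
      algebraMap ℂ[X] (RatFunc ℂ) (h.denom.comp (C q * X)) := by
    conv_lhs => rw [← h.num_div_denom, map_div₀, sigma_algebraMap hσ, sigma_algebraMap hσ]
  rw [ordAt_rep hσh (comp_qX_ne_zero hq (RatFunc.num_ne_zero hh))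
      (comp_qX_ne_zero hq h.denom_ne_zero) heq a,
    rootMultiplicity_comp hq (RatFunc.num_ne_zero hh),
    rootMultiplicity_comp hq h.denom_ne_zero]
  rfl

lemma not_isZero_ordAt {u : RatFunc ℂ} (h : ¬ IsZero u b) : ordAt b u ≤ 0 := by
  have : rootMultiplicity b u.num = 0 := rootMultiplicity_eq_zero (by simpa [IsRoot, IsZero] using h)
  unfold ordAt; omega

lemma not_isPole_ordAt {u : RatFunc ℂ} (h : ¬ IsPole u b) : 0 ≤ ordAt b u := by
  have : rootMultiplicity b u.denom = 0 :=
    rootMultiplicity_eq_zero (by simpa [IsRoot, IsPole] using h)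
  unfold ordAt; omega

lemma isPole_ordAt {u : RatFunc ℂ} (hu : u ≠ 0) (h : IsPole u b) : ordAt b u < 0 := by
  have hcop := u.isCoprime_num_denom
  have hnum : u.num.eval b ≠ 0 := by
    intro h0
    obtain ⟨x, y, hxy⟩ := hcop
    have := congrArg (eval b) hxy
    simp [h0, show u.denom.eval b = 0 from h] at this
  have h1 : rootMultiplicity b u.num = 0 := rootMultiplicity_eq_zero (by simpa [IsRoot] using hnum)
  have h2 : 0 < rootMultiplicity b u.denom := (rootMultiplicity_pos u.denom_ne_zero).mpr h
  unfold ordAt; omega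

lemma isZero_ordAt {u : RatFunc ℂ} (hu : u ≠ 0) (h : IsZero u b) : 0 < ordAt b u := by
  have hcop := u.isCoprime_num_denom
  have hden : u.denom.eval b ≠ 0 := by
    intro h0
    obtain ⟨x, y, hxy⟩ := hcop
    have := congrArg (eval b) hxy
    simp [h0, show u.num.eval b = 0 from h] at this
  have h1 : rootMultiplicity b u.denom = 0 :=
    rootMultiplicity_eq_zero (by simpa [IsRoot] using hden)
  have h2 : 0 < rootMultiplicity b u.num :=
    (rootMultiplicity_pos (RatFunc.num_ne_zero hu)).mpr h
  unfold ordAt; omega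

lemma finite_ordAt_ne_zero {h : RatFunc ℂ} (hh : h ≠ 0) :
    {b : ℂ | ordAt b h ≠ 0}.Finite := by
  apply Set.Finite.subset (Set.Finite.union
    (Polynomial.finite_setOf_isRoot (p := h.num) (RatFunc.num_ne_zero hh))
    (Polynomial.finite_setOf_isRoot (p := h.denom) h.denom_ne_zero))
  intro b hb
  by_contra hc
  simp only [Set.mem_union, Set.mem_setOf_eq, not_or] at hc
  have h1 : rootMultiplicity b h.num = 0 := rootMultiplicity_eq_zero hc.1
  have h2 : rootMultiplicity b h.denom = 0 := rootMultiplicity_eq_zero hc.2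
  exact hb (by unfold ordAt; omega)

lemma arith (f g : ℤ → ℤ) (hfg : ∀ n, f (n + 1) = g n + f n) (hg : ∀ n, g n ≤ 0)
    (hg0 : g 0 < 0) {m n : ℤ} (hm : m ≤ 0) (hn : 1 ≤ n) (hfm : f m = 0) (hfn : f n = 0) :
    False := by
  have h1 : ∀ k : ℤ, 0 ≤ k → f 0 ≤ f (-k) := by
    intro k hk
    refine Int.le_induction (motive := fun k _ => f 0 ≤ f (-k)) ?_ ?_ k hk
    · show f 0 ≤ f (-0); rw [neg_zero]
    · intro k hk ih
      show f 0 ≤ f (-(k + 1))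
      change f 0 ≤ f (-k) at ih
      have e : f (-k) = g (-(k + 1)) + f (-(k + 1)) := by
        have := hfg (-(k + 1))
        rw [show -(k + 1) + 1 = -k by ring] at this
        exact this
      have := hg (-(k + 1))
      omega
  have h2 : ∀ k : ℤ, 1 ≤ k → f k ≤ f 1 := by
    intro k hk
    refine Int.le_induction (motive := fun k _ => f k ≤ f 1) ?_ ?_ k hk
    · show f 1 ≤ f 1; exact le_refl _
    · intro k hk ih
      show f (k + 1) ≤ f 1
      change f k ≤ f 1 at ih
      have := hfg k
      have := hg k
      omega
  have e1 : f 0 ≤ f (-(-m)) := h1 (-m) (by omega)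
  rw [neg_neg] at e1
  have e2 := h2 n hn
  have h01 : f 1 = g 0 + f 0 := by simpa using hfg 0
  omega

end Statement7Aux

open Statement7Aux Polynomial in
theorem statement7 (q : ℂ) (hq : q ≠ 0) (hroot : ∀ n : ℕ, 1 ≤ n → q ^ n ≠ 1)
    (σ : RatFunc ℂ ≃ₐ[ℂ] RatFunc ℂ)
    (hσ : σ RatFunc.X = RatFunc.C q * RatFunc.X)
    (u : RatFunc ℂ) (hu : u ≠ 0)
    (hcrit : ∃ a : ℂ, a ≠ 0 ∧
      ((IsPole u a ∧ ∀ n : ℤ, ¬ IsZero u (q ^ n * a)) ∨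
        (IsZero u a ∧ ∀ n : ℤ, ¬ IsPole u (q ^ n * a)))) :
    ¬ ∃ h : RatFunc ℂ, h ≠ 0 ∧ σ h = u * h := by
  rintro ⟨h, hh, heq⟩
  obtain ⟨a, ha, hcase⟩ := hcrit
  -- injectivity of the orbit map
  have hzpow : ∀ k : ℤ, q ^ k = 1 → k = 0 := by
    intro k hk
    by_contra hk0
    rcases lt_or_gt_of_ne hk0 with hlt | hgt
    · have : q ^ (-k) = 1 := by rw [zpow_neg, hk, inv_one]
      have hnat : q ^ ((-k).toNat) = 1 := by
        rw [← zpow_natCast, Int.toNat_of_nonneg (by omega)]; exact this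
      exact hroot _ (by omega) hnat
    · have hnat : q ^ (k.toNat) = 1 := by
        rw [← zpow_natCast, Int.toNat_of_nonneg (by omega)]; exact hk
      exact hroot _ (by omega) hnat
  have hinj : Function.Injective (fun n : ℤ => q ^ n * a) := by
    intro m n hmn
    simp only at hmn
    have : q ^ m = q ^ n := mul_right_cancel₀ ha hmn
    have h1 : q ^ (m - n) = 1 := by
      rw [zpow_sub₀ hq, this, div_self (zpow_ne_zero _ hq)]
    have := hzpow _ h1
    omega
  set F : ℤ → ℤ := fun n => ordAt (q ^ n * a) h with hF
  set G : ℤ → ℤ := fun n => ordAt (q ^ n * a) u with hG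
  -- the recurrence
  have hrec : ∀ n : ℤ, F (n + 1) = G n + F n := by
    intro n
    have e1 : q ^ (n + 1) * a = q * (q ^ n * a) := by
      rw [zpow_add_one₀ hq]; ring
    have := ordAt_sigma hq hσ hh (q ^ n * a)
    rw [heq, ordAt_mul hu hh] at this
    simp only [hF, hG, e1]
    rw [← this]
  -- finiteness: F vanishes far away
  have hfin : {n : ℤ | F n ≠ 0}.Finite := by
    have := (finite_ordAt_ne_zero hh).preimage (hinj.injOn)
    exact this
  obtain ⟨b, hb⟩ := hfin.bddAbove
  obtain ⟨c, hc⟩ := hfin.bddBelow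
  have hFm : F (min (c - 1) 0) = 0 := by
    by_contra hne
    have := hc hne
    omega
  have hFn : F (max (b + 1) 1) = 0 := by
    by_contra hne
    have := hb hne
    omega
  have ha0 : q ^ (0 : ℤ) * a = a := by rw [zpow_zero, one_mul]
  rcases hcase with ⟨hpole, hnozero⟩ | ⟨hzero, hnopole⟩
  · exact arith F G hrec (fun n => not_isZero_ordAt (hnozero n))
      (by simpa only [hG, ha0] using isPole_ordAt hu hpole)
      (min_le_right _ _) (le_max_right _ _) hFm hFn
  · refine arith (fun n => -F n) (fun n => -G n) (m := min (c - 1) 0) (n := max (b + 1) 1)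
      (fun n => ?_) (fun n => ?_) ?_ (min_le_right _ _) (le_max_right _ _) ?_ ?_
    · show -F (n + 1) = -G n + -F n
      have := hrec n; omega
    · show -G n ≤ 0
      have h1 : 0 ≤ G n := not_isPole_ordAt (hnopole n)
      omega
    · show -G 0 < 0
      have h1 : 0 < G 0 := by
        show 0 < ordAt (q ^ (0 : ℤ) * a) u
        rw [ha0]; exact isZero_ordAt hu hzero
      omega
    · show -F (min (c - 1) 0) = 0
      omega
    · show -F (max (b + 1) 1) = 0
      omega
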